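/- For a = (a₁,…,a_n) ∈ (ℂ*)ⁿ, the kernel of the joint evaluation ev_a : OA → sl₂ⁿ, X ↦ (ev_{a₁}(X),…,ev_{a_n}(X)), equals I_{U_a(t)} where U_a(t) = ∏_{distinct values a among the a_j} U_a(t); and ev_a is surjective if and only if a_j ≠ ±1 for all j and a_j ≠ a_k^{±1} for all j ≠ k. -/

import Mathlib

open LaurentPolynomial

noncomputable section

namespace Onsager

attribute [local instance 100] LieRing.ofAssociativeRing

/-- Laurent polynomials over ℂ, i.e. the ring `ℂ[t,t⁻¹]`. -/
abbrev R : Type := LaurentPolynomial ℂ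

/-- The involution `t ↦ t⁻¹` of `ℂ[t,t⁻¹]`. -/
abbrev inv : R ≃ₐ[ℂ] R := LaurentPolynomial.invert

/-- The loop algebra of `gl₂`: 2×2 matrices over `ℂ[t,t⁻¹]`.  The loop algebra
`L(sl₂) = ℂ[t,t⁻¹] ⊗ sl₂` is its Lie subalgebra of traceless matrices. -/
abbrev Loop : Type := Matrix (Fin 2) (Fin 2) R

/-- The standard generator `e` of `sl₂`, viewed inside the loop algebra. -/
def e : Loop := !![0, 1; 0, 0]
/-- The standard generator `f` of `sl₂`. -/
def f : Loop := !![0, 0; 1, 0]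
/-- The standard generator `h` of `sl₂`. -/
def h : Loop := !![1, 0; 0, -1]

/-- The element `p(t)e + q(t)f + r(t)h` of the loop algebra. -/
def elt (p q r : R) : Loop := p • e + q • f + r • h

lemma elt_eq (p q r : R) : elt p q r = !![r, p; q, -r] := by
  ext i j
  fin_cases i <;> fin_cases j <;> simp [elt, e, f, h]

/-- The swap matrix implementing the involution `θ` of `sl₂`. -/
def Sw : Loop := !![0, 1; 1, 0]

/-- The involution `θ̂` of the loop algebra, `θ̂(p(t) ⊗ x) = p(t⁻¹) ⊗ θ(x)`,
where `θ(e) = f`, `θ(f) = e`, `θ(h) = -h`. -/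
def thetaHat (x : Loop) : Loop := Sw * x.map inv * Sw

lemma Sw_mul_Sw : Sw * Sw = 1 := by
  ext i j
  fin_cases i <;> fin_cases j <;>
    simp [Sw, Matrix.mul_apply, Fin.sum_univ_two, Matrix.one_apply]

lemma map_inv_eq (x : Loop) : x.map inv = (AlgEquiv.mapMatrix (R := ℂ) inv) x := rfl

lemma thetaHat_mul (x y : Loop) : thetaHat (x * y) = thetaHat x * thetaHat y := by
  simp only [thetaHat, map_inv_eq, map_mul]
  calc Sw * (inv.mapMatrix x * inv.mapMatrix y) * Sw
      = Sw * inv.mapMatrix x * (Sw * Sw) * (inv.mapMatrix y * Sw) := by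
        rw [Sw_mul_Sw]; noncomm_ring
    _ = Sw * inv.mapMatrix x * Sw * (Sw * (inv.mapMatrix y * Sw)) := by noncomm_ring
    _ = _ := by noncomm_ring

lemma thetaHat_add (x y : Loop) : thetaHat (x + y) = thetaHat x + thetaHat y := by
  simp only [thetaHat, map_inv_eq, map_add, mul_add, add_mul]

lemma thetaHat_sub (x y : Loop) : thetaHat (x - y) = thetaHat x - thetaHat y := by
  simp only [thetaHat, map_inv_eq, map_sub, mul_sub, sub_mul]

lemma thetaHat_smul (c : ℂ) (x : Loop) : thetaHat (c • x) = c • thetaHat x := by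
  simp only [thetaHat, map_inv_eq, map_smul, Matrix.smul_mul, Matrix.mul_smul]

/-- The Onsager algebra, realized as the subalgebra of the loop algebra of `sl₂`
fixed by the involution `θ̂`. -/
def OASub : LieSubalgebra ℂ Loop where
  carrier := {x | thetaHat x = x ∧ Matrix.trace x = 0}
  add_mem' := by
    rintro x y ⟨hx1, hx2⟩ ⟨hy1, hy2⟩
    exact ⟨by rw [thetaHat_add, hx1, hy1], by simp [hx2, hy2]⟩
  zero_mem' := by
    constructor
    · have := thetaHat_smul 0 0
      simpa using this
    · simp
  smul_mem' := by
    rintro c x ⟨hx1, hx2⟩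
    exact ⟨by rw [thetaHat_smul, hx1], by simp [hx2]⟩
  lie_mem' := by
    rintro x y ⟨hx1, hx2⟩ ⟨hy1, hy2⟩
    constructor
    · rw [Ring.lie_def, thetaHat_sub, thetaHat_mul, thetaHat_mul, hx1, hy1]
    · rw [Ring.lie_def]
      simp [Matrix.trace_mul_comm x y]

/-- The Onsager algebra as a type (a Lie algebra over ℂ). -/
abbrev OA : Type := ↥OASub

/-- For a polynomial `P(t)`, the ideal `I_P` of the Onsager algebra consisting of the
elements `p(t)e + p(t⁻¹)f + q(t)h` with `P | p` and `P | q`. -/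
def IP (P : Polynomial ℂ) : LieIdeal ℂ OA where
  carrier := {X | ∀ i j, P.toLaurent ∣ (X : Loop) i j}
  add_mem' := by
    intro x y hx hy i j
    simpa using dvd_add (hx i j) (hy i j)
  zero_mem' := by intro i j; simp
  smul_mem' := by
    intro c x hx i j
    have : ((c • x : OA) : Loop) i j = c • ((x : Loop) i j) := rfl
    rw [this, Algebra.smul_def]
    exact (hx i j).mul_left _
  lie_mem := by
    intro x m hm i j
    have hco : ((⁅x, m⁆ : OA) : Loop) = ⁅(x : Loop), (m : Loop)⁆ := rfl
    rw [hco, Ring.lie_def]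
    have h1 : P.toLaurent ∣ ((x : Loop) * (m : Loop)) i j := by
      rw [Matrix.mul_apply]
      exact Finset.dvd_sum fun k _ => (hm k j).mul_left _
    have h2 : P.toLaurent ∣ ((m : Loop) * (x : Loop)) i j := by
      rw [Matrix.mul_apply]
      exact Finset.dvd_sum fun k _ => (hm i k).mul_right _
    simpa using dvd_sub h1 h2

/-- A nonconstant monic polynomial `P` of degree `d` is *reciprocal* if
`P(t) = ± t^d P(t⁻¹)`. -/
def IsReciprocal (P : Polynomial ℂ) : Prop :=
  P.Monic ∧ 0 < P.natDegree ∧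
    (P.toLaurent = T (P.natDegree : ℤ) * inv P.toLaurent ∨
     P.toLaurent = -(T (P.natDegree : ℤ) * inv P.toLaurent))

/-- The elementary reciprocal polynomial `U_a`. -/
def U (a : ℂ) : Polynomial ℂ :=
  if a = 1 ∨ a = -1 then Polynomial.X - Polynomial.C a
  else Polynomial.X ^ 2 - Polynomial.C (a + a⁻¹) * Polynomial.X + 1

/-- Evaluation of a Laurent polynomial at a nonzero complex number. -/
def evalL (a : ℂ) (p : R) : ℂ := p.coeff.sum fun n c => c * a ^ n

/-- Evaluation `ev_a` of loop-algebra elements at `t = a`. -/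
def ev (a : ℂ) (x : Loop) : Matrix (Fin 2) (Fin 2) ℂ := x.map (evalL a)

/-- The element `A_m = 2t^m e + 2t^{-m} f` of the loop algebra. -/
def AmL (m : ℤ) : Loop := elt (2 * T m) (2 * T (-m)) 0

/-- The element `G_m = (t^m - t^{-m}) h` of the loop algebra. -/
def GmL (m : ℤ) : Loop := elt 0 0 (T m - T (-m))

lemma thetaHat_elt (p q r : R) :
    thetaHat (elt p q r) = elt (inv q) (inv p) (-(inv r)) := by
  rw [elt_eq, elt_eq]
  have hmap : (!![r, p; q, -r] : Loop).map ⇑inv = !![inv r, inv p; inv q, -(inv r)] := by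
    ext i j
    fin_cases i <;> fin_cases j <;> simp [Matrix.map_apply]
  rw [thetaHat, hmap, Sw]
  ext i j
  fin_cases i <;> fin_cases j <;>
    simp [Matrix.mul_apply, Fin.sum_univ_two]

lemma elt_mem (p r : R) (hr : inv r = -r) : elt p (inv p) r ∈ OASub := by
  constructor
  · rw [thetaHat_elt, hr, neg_neg, LaurentPolynomial.involutive_invert p]
  · rw [elt_eq]
    simp [Matrix.trace_fin_two]

/-- `A_m` as an element of the Onsager algebra. -/
def Am (m : ℤ) : OA :=
  ⟨AmL m, by
    have h2 : inv (2 * T m : R) = 2 * T (-m) := by simp [map_ofNat]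
    have hm := elt_mem (2 * T m) 0 (by simp)
    rw [h2] at hm
    exact hm⟩

/-- `G_m` as an element of the Onsager algebra. -/
def Gm (m : ℤ) : OA :=
  ⟨GmL m, by
    have hm := elt_mem 0 (T m - T (-m)) (by simp [neg_sub])
    rw [map_zero] at hm
    exact hm⟩


/-! ### Helper lemmas -/

/-- evaluation at a unit, as an algebra hom -/
def evalAlg (a : ℂˣ) : R →ₐ[ℂ] ℂ :=
  AddMonoidAlgebra.lift ℂ ℂ ℤ ((Units.coeHom ℂ).comp (zpowersHom ℂˣ a))

lemma evalL_eq' (a : ℂˣ) (p : R) : evalL (a : ℂ) p = evalAlg a p := by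
  rw [evalAlg, AddMonoidAlgebra.lift_apply, evalL]
  refine Finsupp.sum_congr fun n _ => ?_
  simp [smul_eq_mul, Units.val_zpow_eq_zpow_val]

lemma evalAlg_T (a : ℂˣ) (n : ℤ) : evalAlg a (T n) = (a : ℂ) ^ n := by
  rw [T, evalAlg, AddMonoidAlgebra.lift_single]
  simp [Units.val_zpow_eq_zpow_val]

lemma evalAlg_toLaurent (a : ℂˣ) (P : Polynomial ℂ) :
    evalAlg a (Polynomial.toLaurent P) = P.eval (a : ℂ) := by
  have key : (evalAlg a).comp (Polynomial.toLaurentAlg (R := ℂ)) = Polynomial.aeval (a : ℂ) := by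
    apply Polynomial.algHom_ext
    simp [Polynomial.toLaurentAlg_apply, Polynomial.toLaurent_X, evalAlg_T]
  have h2 := congrArg (fun f => f P) key
  simpa [Polynomial.toLaurentAlg_apply, Polynomial.aeval_def, Polynomial.eval_map] using h2

lemma evalAlg_invert (a : ℂˣ) (p : R) : evalAlg a (inv p) = evalAlg a⁻¹ p := by
  have key : (evalAlg a).comp (inv : R ≃ₐ[ℂ] R).toAlgHom = evalAlg a⁻¹ := by
    apply AddMonoidAlgebra.algHom_ext
    intro n
    have hT : (AddMonoidAlgebra.single (n : ℤ) (1:ℂ) : R) = T n := rfl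
    simp [hT, evalAlg_T, AlgHom.comp_apply]
    exact Subsingleton.elim _ _
  exact congrArg (fun f => f p) key

lemma sq_ne {a : ℂ} (ha : a ≠ 0) (h : ¬(a = 1 ∨ a = -1)) : a ≠ a⁻¹ := by
  intro hc
  refine h (mul_self_eq_one_iff.1 ?_)
  nth_rw 1 [hc]
  exact inv_mul_cancel₀ ha

lemma U_factor {a : ℂ} (ha : a ≠ 0) (h : ¬(a = 1 ∨ a = -1)) :
    U a = (Polynomial.X - Polynomial.C a) * (Polynomial.X - Polynomial.C a⁻¹) := by
  rw [U, if_neg h, map_add]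
  have h1 : (1 : Polynomial ℂ) = Polynomial.C a * Polynomial.C a⁻¹ := by
    rw [← map_mul, mul_inv_cancel₀ ha, map_one]
  rw [h1]
  ring

lemma inv_not_pm_one {a : ℂ} (h : ¬(a = 1 ∨ a = -1)) : ¬(a⁻¹ = 1 ∨ a⁻¹ = -1) := by
  push_neg at h ⊢
  constructor <;> intro hc
  · exact h.1 (by rw [← inv_inv a, hc]; norm_num)
  · exact h.2 (by rw [← inv_inv a, hc]; norm_num)

lemma U_inv {a : ℂ} (ha : a ≠ 0) : U a⁻¹ = U a := by
  by_cases h : a = 1 ∨ a = -1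
  · have hh : a⁻¹ = a := by rcases h with rfl | rfl <;> norm_num
    rw [hh]
  · rw [U_factor (inv_ne_zero ha) (inv_not_pm_one h), U_factor ha h, inv_inv, mul_comm]

lemma U_root_iff {a : ℂ} (ha : a ≠ 0) (z : ℂ) :
    (U a).eval z = 0 ↔ z = a ∨ z = a⁻¹ := by
  by_cases h : a = 1 ∨ a = -1
  · have hinv : a⁻¹ = a := by rcases h with rfl | rfl <;> norm_num
    rw [U, if_pos h]
    simp [sub_eq_zero, hinv]
  · rw [U_factor ha h]
    simp [sub_eq_zero]

lemma U_eval_self {a : ℂ} (ha : a ≠ 0) : (U a).eval a = 0 :=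
  (U_root_iff ha a).2 (Or.inl rfl)

lemma X_sub_C_coprime {a b : ℂ} (hne : a ≠ b) :
    IsCoprime (Polynomial.X - Polynomial.C a) (Polynomial.X - Polynomial.C b) := by
  have key := Polynomial.pairwise_coprime_X_sub_C (K := ℂ) (I := Bool)
    (s := fun x => if x then a else b) ?_
  · simpa [Function.onFun] using key (show (true : Bool) ≠ false by simp)
  · intro x y hxy
    cases x <;> cases y <;> simp_all

lemma U_dvd {a : ℂ} (ha : a ≠ 0) {r : Polynomial ℂ} (h1 : r.eval a = 0)
    (h2 : r.eval a⁻¹ = 0) : U a ∣ r := by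
  by_cases h : a = 1 ∨ a = -1
  · rw [U, if_pos h]
    exact Polynomial.dvd_iff_isRoot.2 h1
  · rw [U_factor ha h]
    exact (X_sub_C_coprime (sq_ne ha h)).mul_dvd (Polynomial.dvd_iff_isRoot.2 h1)
      (Polynomial.dvd_iff_isRoot.2 h2)

lemma U_coprime {a b : ℂ} (ha : a ≠ 0) (hb : b ≠ 0) (hne : U a ≠ U b) :
    IsCoprime (U a) (U b) := by
  have hab : a ≠ b := fun h => hne (by rw [h])
  have hab' : a ≠ b⁻¹ := fun h => hne (by rw [h, U_inv hb])
  have hab2 : a⁻¹ ≠ b := fun h => hne (by rw [← h, U_inv ha])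
  have hab3 : a⁻¹ ≠ b⁻¹ := fun h => hne (by rw [inv_injective h])
  by_cases h1 : a = 1 ∨ a = -1 <;> by_cases h2 : b = 1 ∨ b = -1
  · rw [U, if_pos h1, U, if_pos h2]
    exact X_sub_C_coprime hab
  · rw [U, if_pos h1, U_factor hb h2]
    exact (X_sub_C_coprime hab).mul_right (X_sub_C_coprime hab')
  · rw [U_factor ha h1, U, if_pos h2]
    exact (X_sub_C_coprime hab).mul_left (X_sub_C_coprime hab2)
  · rw [U_factor ha h1, U_factor hb h2]
    exact ((X_sub_C_coprime hab).mul_right (X_sub_C_coprime hab')).mul_left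
      ((X_sub_C_coprime hab2).mul_right (X_sub_C_coprime hab3))

lemma Pprod_eval {n : ℕ} {a : Fin n → ℂ} (ha : ∀ j, a j ≠ 0) (j : Fin n) :
    ((Finset.image (fun j => U (a j)) Finset.univ).prod id).eval (a j) = 0 := by
  have hdvd : U (a j) ∣ (Finset.image (fun j => U (a j)) Finset.univ).prod id :=
    Finset.dvd_prod_of_mem id (Finset.mem_image_of_mem _ (Finset.mem_univ j))
  exact Polynomial.eval_eq_zero_of_dvd_of_eval_eq_zero hdvd (U_eval_self (ha j))

lemma entry_dvd {n : ℕ} {a : Fin n → ℂ} (ha : ∀ j, a j ≠ 0) {q : R}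
    (hq : ∀ j, evalAlg (Units.mk0 (a j) (ha j)) q = 0)
    (hq' : ∀ j, evalAlg (Units.mk0 (a j) (ha j))⁻¹ q = 0) :
    Polynomial.toLaurent ((Finset.image (fun j => U (a j)) Finset.univ).prod id) ∣ q := by
  obtain ⟨k, r, hr⟩ := exists_T_pow q
  have hre : ∀ j, r.eval (a j) = 0 := fun j => by
    have h0 : evalAlg (Units.mk0 (a j) (ha j)) (Polynomial.toLaurent r) = 0 := by
      rw [hr, map_mul, hq j, zero_mul]
    rwa [evalAlg_toLaurent, Units.val_mk0] at h0
  have hre' : ∀ j, r.eval (a j)⁻¹ = 0 := fun j => by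
    have h0 : evalAlg (Units.mk0 (a j) (ha j))⁻¹ (Polynomial.toLaurent r) = 0 := by
      rw [hr, map_mul, hq' j, zero_mul]
    rwa [evalAlg_toLaurent, Units.val_inv_eq_inv_val, Units.val_mk0] at h0
  have hPr : ((Finset.image (fun j => U (a j)) Finset.univ).prod id) ∣ r := by
    apply Finset.prod_dvd_of_coprime
    · intro u hu v hv huv
      simp only [Finset.coe_image, Set.mem_image, Finset.mem_coe] at hu hv
      obtain ⟨j, -, rfl⟩ := hu
      obtain ⟨k', -, rfl⟩ := hv
      exact U_coprime (ha j) (ha k') huv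
    · intro u hu
      simp only [Finset.mem_image, Finset.mem_univ, true_and] at hu
      obtain ⟨j, rfl⟩ := hu
      exact U_dvd (ha j) (hre j) (hre' j)
  have hq2 : q = Polynomial.toLaurent r * T (-(k : ℤ)) := by
    rw [hr, mul_assoc, ← T_add]
    norm_num
  rw [hq2]
  exact ((map_dvd (Polynomial.toLaurent (R := ℂ)) hPr)).mul_right _

lemma evalL_eq {b : ℂ} (hb : b ≠ 0) (q : R) : evalL b q = evalAlg (Units.mk0 b hb) q := by
  have h := evalL_eq' (Units.mk0 b hb) q
  rwa [Units.val_mk0] at h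

lemma thetaHat_entry (x : Loop) (i j : Fin 2) :
    thetaHat x i j = inv (x (i + 1) (j + 1)) := by
  fin_cases i <;> fin_cases j <;>
    simp [thetaHat, Sw, Matrix.mul_apply, Fin.sum_univ_two, Matrix.map_apply,
      Matrix.vecMul, dotProduct]

lemma inv_entry {x : Loop} (hx : thetaHat x = x) (i j : Fin 2) :
    inv (x i j) = x (i + 1) (j + 1) := by
  have h : thetaHat x (i + 1) (j + 1) = x (i + 1) (j + 1) := by rw [hx]
  rw [thetaHat_entry] at h
  have h2 : ∀ m : Fin 2, m + 1 + 1 = m := by decide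
  rwa [h2, h2] at h

lemma ev00_neg {x : Loop} (hx : x ∈ OASub) {b c : ℂ} (hb : b ≠ 0) (hc : c ≠ 0)
    (hbc : b = c⁻¹) :
    evalAlg (Units.mk0 b hb) (x 0 0) = -evalAlg (Units.mk0 c hc) (x 0 0) := by
  obtain ⟨hsym, htr⟩ := hx
  have h11 : x 1 1 = -(x 0 0) := by
    rw [Matrix.trace_fin_two] at htr
    linear_combination htr
  have hinv : inv (x 0 0) = -(x 0 0) := by
    have h := inv_entry hsym 0 0
    rw [show ((0 : Fin 2) + 1) = 1 from rfl] at h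
    rw [h, h11]
  have hu : Units.mk0 b hb = (Units.mk0 c hc)⁻¹ := by
    ext
    rw [Units.val_inv_eq_inv_val, Units.val_mk0, Units.val_mk0, hbc]
  rw [hu, ← evalAlg_invert, hinv, map_neg]

/-- **Lemma 13 of Date–Roan.**  For `a = (a₁,…,aₙ) ∈ (ℂ*)ⁿ`, the kernel of the joint
evaluation `ev_a : OA → sl₂ⁿ` equals `I_{U_a}`, where `U_a` is the product of the
distinct elementary reciprocal polynomials `U_{aⱼ}` (each reciprocal pair counted
once); and `ev_a` is surjective onto `sl₂ⁿ` (the tuples of traceless matrices) if and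
only if `aⱼ ≠ ±1` for all `j` and `aⱼ ≠ a_k^{±1}` for `j ≠ k`. -/
theorem joint_eval_kernel_and_surjectivity (n : ℕ) (a : Fin n → ℂ)
    (ha : ∀ j, a j ≠ 0) :
    (∀ X : OA, (∀ j, ev (a j) (X : Loop) = 0) ↔
        X ∈ IP ((Finset.image (fun j => U (a j)) Finset.univ).prod id)) ∧
    ((Set.range (fun (X : OA) (j : Fin n) => ev (a j) (X : Loop)) =
        {v : Fin n → Matrix (Fin 2) (Fin 2) ℂ | ∀ j, Matrix.trace (v j) = 0}) ↔
      ((∀ j, a j ≠ 1 ∧ a j ≠ -1) ∧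
        ∀ j k, j ≠ k → a j ≠ a k ∧ a j ≠ (a k)⁻¹)) := by
  constructor
  · -- Part 1: kernel
    intro X
    obtain ⟨hsym, htr⟩ := X.2
    have hvE : (∀ j, ev (a j) (X : Loop) = 0) →
        ∀ k i j, evalAlg (Units.mk0 (a k) (ha k)) ((X : Loop) i j) = 0 := by
      intro hv k i j
      have h0 : ev (a k) (X : Loop) i j = (0 : Matrix (Fin 2) (Fin 2) ℂ) i j := by rw [hv k]
      have h1 : evalL (a k) ((X : Loop) i j) = 0 := by
        simpa [ev, Matrix.map_apply] using h0
      rwa [evalL_eq (ha k)] at h1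
    constructor
    · intro hv
      intro i j
      apply entry_dvd ha (fun k => hvE hv k i j)
      intro k
      have h3 : inv ((X : Loop) i j) = (X : Loop) (i + 1) (j + 1) := inv_entry hsym i j
      have h4 := evalAlg_invert (Units.mk0 (a k) (ha k)) ((X : Loop) i j)
      rw [h3, hvE hv k (i + 1) (j + 1)] at h4
      exact h4.symm
    · intro hd k
      have hd' : ∀ i j, Polynomial.toLaurent
          ((Finset.image (fun j => U (a j)) Finset.univ).prod id) ∣ (X : Loop) i j := hd
      ext i j
      obtain ⟨s, hs⟩ := hd' i j
      show evalL (a k) ((X : Loop) i j) = 0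
      rw [evalL_eq (ha k), hs, map_mul, evalAlg_toLaurent, Units.val_mk0,
        Pprod_eval ha k, zero_mul]
  · -- Part 2: surjectivity
    constructor
    · -- surjectivity implies the conditions
      intro hs
      have hsur : ∀ v : Fin n → Matrix (Fin 2) (Fin 2) ℂ, (∀ j, Matrix.trace (v j) = 0) →
          ∃ X : OA, ∀ j, ev (a j) (X : Loop) = v j := by
        intro v hv
        have hmem : v ∈ Set.range (fun (X : OA) (j : Fin n) => ev (a j) (X : Loop)) := by
          rw [hs]; exact hv
        obtain ⟨X, hX⟩ := hmem
        exact ⟨X, fun j => congrFun hX j⟩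
      have htest : ∀ j₀ : Fin n, ∀ j : Fin n,
          Matrix.trace ((fun j => if j = j₀ then !![(1:ℂ),0;0,-1] else 0) j) = 0 := by
        intro j₀ j
        by_cases h : j = j₀ <;> simp [h, Matrix.trace_fin_two]
      -- entry (0,0) of ev is evalAlg of x 0 0
      have hev00 : ∀ (x : Loop) (k : Fin n), ev (a k) x 0 0
          = evalAlg (Units.mk0 (a k) (ha k)) (x 0 0) := by
        intro x k
        show evalL (a k) (x 0 0) = _
        rw [evalL_eq (ha k)]
      constructor
      · intro j
        constructor <;> intro hj
        all_goals {
          obtain ⟨X, hX⟩ := hsur _ (htest j)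
          have h1 : ev (a j) (X : Loop) 0 0 = 1 := by rw [hX j]; simp
          rw [hev00] at h1
          have h2 := ev00_neg X.2 (ha j) (ha j)
            (by rw [hj]; norm_num)
          rw [h1] at h2
          norm_num at h2
        }
      · intro j k hjk
        constructor <;> intro hj
        · obtain ⟨X, hX⟩ := hsur _ (htest j)
          have h1 : ev (a j) (X : Loop) 0 0 = 1 := by rw [hX j]; simp
          have h0 : ev (a k) (X : Loop) 0 0 = 0 := by rw [hX k]; simp [Ne.symm hjk]
          rw [hj] at h1
          rw [h1] at h0
          norm_num at h0
        · obtain ⟨X, hX⟩ := hsur _ (htest j)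
          have h1 : ev (a j) (X : Loop) 0 0 = 1 := by rw [hX j]; simp
          have h0 : ev (a k) (X : Loop) 0 0 = 0 := by rw [hX k]; simp [Ne.symm hjk]
          rw [hev00] at h1 h0
          have h2 := ev00_neg X.2 (ha j) (ha k) hj
          rw [h1, h0] at h2
          norm_num at h2
    · -- the conditions imply surjectivity
      rintro ⟨h1, h2⟩
      apply Set.eq_of_subset_of_subset
      · rintro v ⟨X, rfl⟩ j
        obtain ⟨hsym, htr⟩ := X.2
        show Matrix.trace (ev (a j) (X : Loop)) = 0
        rw [Matrix.trace_fin_two]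
        show evalL (a j) ((X : Loop) 0 0) + evalL (a j) ((X : Loop) 1 1) = 0
        rw [evalL_eq (ha j), evalL_eq (ha j), ← map_add]
        rw [Matrix.trace_fin_two] at htr
        rw [htr, map_zero]
      · intro v hv
        have hv' : ∀ j, Matrix.trace (v j) = 0 := hv
        set ν : Fin n ⊕ Fin n → ℂ := Sum.elim a (fun j => (a j)⁻¹) with hν
        have hinj : Function.Injective ν := by
          have hsq : ∀ j, a j ≠ (a j)⁻¹ := fun j =>
            sq_ne (ha j) (by push_neg; exact h1 j)
          rintro (j | j) (k | k) hjk
          · simp only [ν, Sum.elim_inl] at hjk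
            by_contra hne
            exact (h2 j k (fun h => hne (by rw [h]))).1 hjk
          · exfalso
            simp only [ν, Sum.elim_inl, Sum.elim_inr] at hjk
            by_cases hne : j = k
            · subst hne; exact hsq j hjk
            · exact (h2 j k hne).2 hjk
          · exfalso
            simp only [ν, Sum.elim_inl, Sum.elim_inr] at hjk
            by_cases hne : k = j
            · subst hne; exact hsq k hjk.symm
            · exact (h2 k j hne).2 hjk.symm
          · simp only [ν, Sum.elim_inr] at hjk
            have hjk2 : a j = a k := inv_injective hjk
            by_contra hne
            exact (h2 j k (fun h => hne (by rw [h]))).1 hjk2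
        have hInj : Set.InjOn ν (Finset.univ : Finset (Fin n ⊕ Fin n)) :=
          Function.Injective.injOn hinj
        set val1 : Fin n ⊕ Fin n → ℂ := Sum.elim (fun j => v j 0 1) (fun j => v j 1 0) with hval1
        set val2 : Fin n ⊕ Fin n → ℂ := Sum.elim (fun j => v j 0 0) (fun _ => 0) with hval2
        set p' : Polynomial ℂ := Lagrange.interpolate Finset.univ ν val1 with hp'
        set s' : Polynomial ℂ := Lagrange.interpolate Finset.univ ν val2 with hs'
        set p : R := Polynomial.toLaurent p' with hp
        set s : R := Polynomial.toLaurent s' with hsdef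
        set r : R := s - inv s with hrdef
        have hrinv : inv r = -r := by
          show inv (s - inv s) = -(s - inv s)
          rw [map_sub, LaurentPolynomial.involutive_invert s, neg_sub]
        -- evaluation facts
        have hup : ∀ j, evalAlg (Units.mk0 (a j) (ha j)) p = v j 0 1 := by
          intro j
          rw [hp, evalAlg_toLaurent, Units.val_mk0]
          have := Lagrange.eval_interpolate_at_node val1 hInj
            (Finset.mem_univ (Sum.inl j))
          exact this
        have huinv : ∀ (j : Fin n) (q : R), evalAlg (Units.mk0 (a j) (ha j)) (inv q)
            = evalAlg (Units.mk0 ((a j)⁻¹) (inv_ne_zero (ha j))) q := by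
          intro j q
          have hu : (Units.mk0 (a j) (ha j))⁻¹ = Units.mk0 ((a j)⁻¹) (inv_ne_zero (ha j)) := by
            ext
            rw [Units.val_inv_eq_inv_val, Units.val_mk0, Units.val_mk0]
          rw [evalAlg_invert, hu]
        have hup' : ∀ j, evalAlg (Units.mk0 (a j) (ha j)) (inv p) = v j 1 0 := by
          intro j
          rw [huinv, hp, evalAlg_toLaurent, Units.val_mk0]
          have := Lagrange.eval_interpolate_at_node val1 hInj
            (Finset.mem_univ (Sum.inr j))
          exact this
        have hus : ∀ j, evalAlg (Units.mk0 (a j) (ha j)) s = v j 0 0 := by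
          intro j
          rw [hsdef, evalAlg_toLaurent, Units.val_mk0]
          have := Lagrange.eval_interpolate_at_node val2 hInj
            (Finset.mem_univ (Sum.inl j))
          exact this
        have hus' : ∀ j, evalAlg (Units.mk0 (a j) (ha j)) (inv s) = 0 := by
          intro j
          rw [huinv, hsdef, evalAlg_toLaurent, Units.val_mk0]
          have := Lagrange.eval_interpolate_at_node val2 hInj
            (Finset.mem_univ (Sum.inr j))
          exact this
        have hur : ∀ j, evalAlg (Units.mk0 (a j) (ha j)) r = v j 0 0 := by
          intro j
          rw [hrdef, map_sub, hus j, hus' j, sub_zero]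
        refine ⟨⟨elt p (inv p) r, elt_mem p r hrinv⟩, ?_⟩
        funext j
        show ev (a j) (elt p (inv p) r) = v j
        have h11 : v j 1 1 = -(v j 0 0) := by
          have := hv' j
          rw [Matrix.trace_fin_two] at this
          linear_combination this
        have hmat : ev (a j) (elt p (inv p) r) = !![v j 0 0, v j 0 1; v j 1 0, v j 1 1] := by
          rw [elt_eq]
          ext i i'
          fin_cases i <;> fin_cases i' <;>
            simp [ev, Matrix.map_apply, evalL_eq (ha j), hur j, hup j, hup' j, h11, map_neg]
        rw [hmat]
        ext i i'
        fin_cases i <;> fin_cases i' <;> simp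

end Onsager
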